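/- Let H ∈ ℝ and let K be a connected component of {x : U(x) ≤ H} which is not a singleton. Then K equals the union of the closures of the connected components of {x : U(x) < H} that intersect K, and every local minimum of U lying in K lies in one of these components: M₀ ∩ K = M₀ ∩ ⋃ {W : W is a connected component of {U < H} with W ∩ K ≠ ∅}. -/

import Mathlib

open Set Filter Metric
open scoped RealInnerProductSpace

noncomputable section

/-- Euclidean space `ℝ^d`. -/
abbrev Eucl (d : ℕ) : Type := EuclideanSpace ℝ (Fin d)

/-- The communication height `Θ(x, y)` between two points. -/
def commHeight {d : ℕ} (U : Eucl d → ℝ) (x y : Eucl d) : ℝ :=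
  ⨅ γ : Path x y, ⨆ t : unitInterval, U (γ t)

/-- The communication height `Θ(A, B)` between two sets, `+∞` if one is empty. -/
def commHeightSet {d : ℕ} (U : Eucl d → ℝ) (A B : Set (Eucl d)) : EReal :=
  ⨅ x ∈ A, ⨅ y ∈ B, (commHeight U x y : EReal)

/-- `M̃`: the local minima of `U` outside `M` of height at most `c = U(M)`. -/
def tildeSet {d : ℕ} (U : Eucl d → ℝ) (M : Set (Eucl d)) (c : ℝ) : Set (Eucl d) :=
  {m' | IsLocalMin U m' ∧ m' ∉ M ∧ U m' ≤ c}

/-- `Ξ(M) = Θ(M, M̃) − U(M) ∈ (0, ∞]`. -/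
def XiSet {d : ℕ} (U : Eucl d → ℝ) (M : Set (Eucl d)) (c : ℝ) : EReal :=
  commHeightSet U M (tildeSet U M c) - (c : EReal)

/-- `M` (simple, common value `c`) is bound. -/
def IsBound {d : ℕ} (U : Eucl d → ℝ) (M : Set (Eucl d)) (c : ℝ) : Prop :=
  (∃ m, M = {m}) ∨
    ∀ m ∈ M, ∀ m' ∈ M, (commHeight U m m' : EReal) < commHeightSet U M (tildeSet U M c)

/-- `A` is a connected component of `S`. -/
def IsCompOf {d : ℕ} (S A : Set (Eucl d)) : Prop :=
  ∃ x ∈ S, A = connectedComponentIn S x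

/-- The Hessian matrix of `U` at `x`. -/
def hessMat {d : ℕ} (U : Eucl d → ℝ) (x : Eucl d) : Matrix (Fin d) (Fin d) ℝ :=
  Matrix.of fun i j =>
    iteratedFDeriv ℝ 2 U x ![EuclideanSpace.single i (1 : ℝ), EuclideanSpace.single j (1 : ℝ)]

/-- `σ` is a saddle point of `U`. -/
def IsSaddle {d : ℕ} (U : Eucl d → ℝ) (σ : Eucl d) : Prop :=
  gradient U σ = 0 ∧
    ∃ hH : (hessMat U σ).IsHermitian,
      IsUnit (hessMat U σ).det ∧ ∃! i, hH.eigenvalues i < 0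

/-- `x ↷ y` : heteroclinic orbit of `ẋ = b(x)` from `x` to `y`. -/
def Hetero {d : ℕ} (b : Eucl d → Eucl d) (x y : Eucl d) : Prop :=
  ∃ φ : ℝ → Eucl d,
    (∀ t, HasDerivAt φ (b (φ t)) t) ∧
      Tendsto φ atBot (nhds x) ∧ Tendsto φ atTop (nhds y)

/-- `σ ↝ m`. -/
def ConnectsTo {d : ℕ} (U : Eucl d → ℝ) (b : Eucl d → Eucl d) (σ m : Eucl d) : Prop :=
  Hetero b σ m ∨
    ∃ (k : ℕ) (_ : 0 < k) (σs : Fin k → Eucl d) (ms : Fin (k + 1) → Eucl d),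
      (∀ i, IsSaddle U (σs i)) ∧ (∀ i, U (σs i) < U σ) ∧
        (∀ i : Fin k, IsLocalMin U (ms i.castSucc)) ∧
        ms (Fin.last k) = m ∧ Hetero b σ (ms 0) ∧
        ∀ i : Fin k, Hetero b (σs i) (ms i.castSucc) ∧ Hetero b (σs i) (ms i.succ)

/-- `σ ↝ M`. -/
def ConnectsToSet {d : ℕ} (U : Eucl d → ℝ) (b : Eucl d → Eucl d) (σ : Eucl d)
    (M : Set (Eucl d)) : Prop :=
  ∃ m ∈ M, ConnectsTo U b σ m

/-- `σ ↷ M`. -/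
def HeteroToSet {d : ℕ} (b : Eucl d → Eucl d) (σ : Eucl d) (M : Set (Eucl d)) : Prop :=
  ∃ m ∈ M, Hetero b σ m

/-- `M →_σ M'`. -/
def AdjacentVia {d : ℕ} (U : Eucl d → ℝ) (b : Eucl d → Eucl d) (M M' : Set (Eucl d))
    (c : ℝ) (σ : Eucl d) : Prop :=
  IsSaddle U σ ∧ ConnectsToSet U b σ M ∧ HeteroToSet b σ M' ∧
    (U σ : EReal) = commHeightSet U M (tildeSet U M c) ∧
    (U σ : EReal) = commHeightSet U M M'

/-- Unstable-manifold property. -/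
def UnstableManifoldProperty {d : ℕ} (U : Eucl d → ℝ) (b : Eucl d → Eucl d) : Prop :=
  ∀ σ : Eucl d, IsSaddle U σ →
    ∃ r' > (0 : ℝ), ∃ Ap Am : Set (Eucl d),
      Ap ≠ Am ∧
      IsCompOf (ball σ r' ∩ {x | U x < U σ}) Ap ∧
      IsCompOf (ball σ r' ∩ {x | U x < U σ}) Am ∧
      (∀ C, IsCompOf (ball σ r' ∩ {x | U x < U σ}) C → C = Ap ∨ C = Am) ∧
      ∃ mp mm : Eucl d, IsLocalMin U mp ∧ IsLocalMin U mm ∧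
        ∃ tp tm : ℝ, ∃ φp φm : ℝ → Eucl d,
          (∀ t, HasDerivAt φp (b (φp t)) t) ∧ (∀ t, HasDerivAt φm (b (φm t)) t) ∧
          Tendsto φp atBot (nhds σ) ∧ Tendsto φp atTop (nhds mp) ∧
          Tendsto φm atBot (nhds σ) ∧ Tendsto φm atTop (nhds mm) ∧
          φp '' Iic tp ⊆ Ap ∧ φm '' Iic tm ⊆ Am

namespace St11Aux

variable {d : ℕ} {U : Eucl d → ℝ}

lemma grad_zero_of_localMin {x : Eucl d} (h : IsLocalMin U x) : gradient U x = 0 := by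
  rw [gradient, h.fderiv_eq_zero, map_zero]

lemma sublevel_compact (hcont : Continuous U)
    (hcoer : Tendsto U (cocompact (Eucl d)) atTop) (H : ℝ) :
    IsCompact {x | U x ≤ H} := by
  have h := hcoer.eventually (eventually_ge_atTop (H + 1))
  rw [Filter.Eventually, mem_cocompact] at h
  obtain ⟨C, hC, hCsub⟩ := h
  refine hC.of_isClosed_subset (isClosed_le hcont continuous_const) ?_
  intro x hx
  by_contra hxC
  have : H + 1 ≤ U x := hCsub hxC
  simp only [mem_setOf_eq] at hx
  linarith

lemma subset_comp {H : ℝ} {K C : Set (Eucl d)} (hK : IsCompOf {x | U x ≤ H} K)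
    (hC : IsPreconnected C) (hCsub : C ⊆ {x | U x ≤ H}) {z : Eucl d}
    (hz1 : z ∈ C) (hz2 : z ∈ K) : C ⊆ K := by
  obtain ⟨x₀, hx₀, rfl⟩ := hK
  rw [connectedComponentIn_eq hz2]
  exact hC.subset_connectedComponentIn hz1 hCsub

/-- If `U ≥ H` on a ball around `x ∈ K`, then `K = {x}`. -/
lemma isolated_case (hcont : Continuous U)
    (hcritfin : {x : Eucl d | gradient U x = 0}.Finite)
    {H : ℝ} {K : Set (Eucl d)} (hK : IsCompOf {x | U x ≤ H} K)
    {x : Eucl d} (hxK : x ∈ K) {ε : ℝ} (hε : 0 < ε)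
    (hball : ∀ y ∈ ball x ε, H ≤ U y) : K = {x} := by
  have hKsub : K ⊆ {x_ | U x_ ≤ H} := by
    obtain ⟨x₀, hx₀, rfl⟩ := hK; exact connectedComponentIn_subset _ _
  have hxH : U x = H :=
    le_antisymm (hKsub hxK) (hball x (mem_ball_self hε))
  -- every sublevel point near x is a critical point
  have hcrit : ∀ y ∈ ball x (ε / 2), U y ≤ H → gradient U y = 0 := by
    intro y hy hyH
    have hyx : dist y x < ε / 2 := mem_ball.1 hy
    have hyH' : U y = H := le_antisymm hyH (hball y (mem_ball.2 (by linarith)))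
    have hsub : ball y (ε / 2) ⊆ ball x ε := by
      intro z hz
      have hzy : dist z y < ε / 2 := mem_ball.1 hz
      exact mem_ball.2 (lt_of_le_of_lt (dist_triangle z y x) (by linarith))
    have hmin : IsLocalMin U y := by
      refine IsMinOn.isLocalMin (s := ball y (ε / 2)) ?_ (ball_mem_nhds y (by linarith))
      intro z hz
      have := hball z (hsub hz)
      simp only [mem_setOf_eq]
      linarith [hyH']
    exact grad_zero_of_localMin hmin
  -- find a small ball avoiding other critical points
  set S : Set (Eucl d) := {x_ | gradient U x_ = 0} \ {x} with hS
  have hSfin : S.Finite := hcritfin.diff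
  have hxS : x ∈ Sᶜ := by simp [hS]
  obtain ⟨δ₀, hδ₀, hδ₀sub⟩ := Metric.isOpen_iff.1 hSfin.isClosed.isOpen_compl x hxS
  set δ := min δ₀ (ε / 2) with hδdef
  have hδpos : 0 < δ := lt_min hδ₀ (by linarith)
  have hkey : ∀ y ∈ ball x δ, U y ≤ H → y = x := by
    intro y hy hyH
    have h1 : y ∈ ball x (ε / 2) := ball_subset_ball (min_le_right _ _) hy
    have h2 : gradient U y = 0 := hcrit y h1 hyH
    have h3 : y ∈ Sᶜ := hδ₀sub (ball_subset_ball (min_le_left _ _) hy)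
    by_contra hne
    exact h3 ⟨h2, hne⟩
  -- clopen argument
  refine eq_singleton_iff_unique_mem.2 ⟨hxK, ?_⟩
  intro z hz
  by_contra hne
  obtain ⟨x₀, hx₀, hKeq⟩ := hK
  have hpre : IsPreconnected K := hKeq ▸ isPreconnected_connectedComponentIn
  obtain ⟨w, hwK, hwu, hwv⟩ :=
    hpre (ball x δ) {x}ᶜ isOpen_ball isClosed_singleton.isOpen_compl
      (fun y _ => by
        by_cases hyx : y = x
        · exact Or.inl (hyx ▸ mem_ball_self hδpos)
        · exact Or.inr hyx)
      ⟨x, hxK, mem_ball_self hδpos⟩ ⟨z, hz, hne⟩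
  exact hwv (hkey w hwu (hKsub hwK))

/-- A point of `{U < H}` in the closure of a component `W` of `{U < H}` lies in `W`. -/
lemma mem_of_mem_closure_comp {H : ℝ} {W : Set (Eucl d)}
    (hW : IsCompOf {x | U x < H} W) {y : Eucl d} (hy : U y < H)
    (hyc : y ∈ closure W) : y ∈ W := by
  obtain ⟨w, hw, rfl⟩ := hW
  have hpre : IsPreconnected (insert y (connectedComponentIn {x | U x < H} w)) :=
    isPreconnected_connectedComponentIn.subset_closure (subset_insert _ _)
      (insert_subset hyc subset_closure)
  have := hpre.subset_connectedComponentIn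
    (mem_insert_of_mem _ (mem_connectedComponentIn hw))
    (insert_subset hy (connectedComponentIn_subset _ _))
  exact this (mem_insert _ _)

/-- Every component of `{U < H}` contains a critical point, which is a local minimum. -/
lemma comp_has_crit (hcont : Continuous U)
    (hcoer : Tendsto U (cocompact (Eucl d)) atTop) {H : ℝ} {W : Set (Eucl d)}
    (hW : IsCompOf {x | U x < H} W) :
    ∃ y ∈ W, gradient U y = 0 ∧ W = connectedComponentIn {x | U x < H} y := by
  obtain ⟨w, hw, rfl⟩ := hW
  set W := connectedComponentIn {x | U x < H} w with hWdef
  have hWsub : W ⊆ {x | U x ≤ H} :=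
    (connectedComponentIn_subset _ _).trans (fun z hz => le_of_lt (show U z < H from hz))
  have hclsub : closure W ⊆ {x | U x ≤ H} :=
    closure_minimal hWsub (isClosed_le hcont continuous_const)
  have hcompact : IsCompact (closure W) :=
    (sublevel_compact hcont hcoer H).of_isClosed_subset isClosed_closure hclsub
  have hwW : w ∈ W := mem_connectedComponentIn hw
  obtain ⟨y, hycl, hymin⟩ :=
    hcompact.exists_isMinOn ⟨w, subset_closure hwW⟩ hcont.continuousOn
  have hyH : U y < H := lt_of_le_of_lt (hymin (subset_closure hwW)) hw
  have hyW : y ∈ W := mem_of_mem_closure_comp ⟨w, hw, rfl⟩ hyH hycl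
  have hWopen : IsOpen W := (isOpen_lt hcont continuous_const).connectedComponentIn
  have hlocmin : IsLocalMin U y :=
    (hymin.on_subset subset_closure).isLocalMin (hWopen.mem_nhds hyW)
  exact ⟨y, hyW, grad_zero_of_localMin hlocmin, connectedComponentIn_eq hyW⟩

lemma closure_sublevel_subset (hcont : Continuous U)
    (hcoer : Tendsto U (cocompact (Eucl d)) atTop)
    (hcritfin : {x : Eucl d | gradient U x = 0}.Finite) (H : ℝ) :
    closure {x | U x < H} ⊆
      ⋃ y ∈ {x : Eucl d | gradient U x = 0},
        closure (connectedComponentIn {x | U x < H} y) := by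
  have hsub : {x | U x < H} ⊆
      ⋃ y ∈ {x : Eucl d | gradient U x = 0}, connectedComponentIn {x | U x < H} y := by
    intro z hz
    obtain ⟨y, hyW, hycrit, hWeq⟩ := comp_has_crit hcont hcoer ⟨z, hz, rfl⟩
    exact mem_biUnion hycrit (hWeq ▸ mem_connectedComponentIn hz)
  calc closure {x | U x < H}
      ⊆ closure (⋃ y ∈ {x : Eucl d | gradient U x = 0},
          connectedComponentIn {x | U x < H} y) := closure_mono hsub
    _ = _ := hcritfin.closure_biUnion _

end St11Aux

open St11Aux in
theorem statement11 {d : ℕ} (hd : 1 ≤ d)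
    (U : Eucl d → ℝ) (hU : ContDiff ℝ (⊤ : ℕ∞) U)
    (hcoer : Tendsto U (cocompact (Eucl d)) atTop)
    (hcritfin : {x : Eucl d | gradient U x = 0}.Finite)
    (hmorse : ∀ x : Eucl d, gradient U x = 0 → IsUnit (hessMat U x).det)
    (H : ℝ) (K : Set (Eucl d)) (hK : IsCompOf {x | U x ≤ H} K)
    (hKns : ¬∃ x, K = {x}) :
    K = ⋃₀ {A | ∃ W, IsCompOf {x | U x < H} W ∧ (W ∩ K).Nonempty ∧ A = closure W} ∧
      {m | IsLocalMin U m} ∩ K =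
        {m | IsLocalMin U m} ∩ ⋃₀ {W | IsCompOf {x | U x < H} W ∧ (W ∩ K).Nonempty} := by
  have hcont : Continuous U := hU.continuous
  have hKsub : K ⊆ {x_ | U x_ ≤ H} := by
    obtain ⟨x₀, hx₀, hKeq⟩ := hK
    exact hKeq ▸ connectedComponentIn_subset _ _
  -- a component of {U < H} meeting K is contained in K
  have hWK : ∀ W : Set (Eucl d), IsCompOf {x | U x < H} W → (W ∩ K).Nonempty → W ⊆ K := by
    intro W hWc ⟨z, hzW, hzK⟩
    have hpre : IsPreconnected W := by
      obtain ⟨w, hw, rfl⟩ := hWc; exact isPreconnected_connectedComponentIn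
    have hWsub : W ⊆ {x | U x ≤ H} := by
      obtain ⟨w, hw, rfl⟩ := hWc
      exact (connectedComponentIn_subset _ _).trans (fun z hz => le_of_lt (show U z < H from hz))
    exact subset_comp hK hpre hWsub hzW hzK
  constructor
  · apply Subset.antisymm
    · intro x hxK
      have hxle : U x ≤ H := hKsub hxK
      rcases lt_or_eq_of_le hxle with hlt | heq
      · -- U x < H : x is in its own component
        refine ⟨closure (connectedComponentIn {x_ | U x_ < H} x),
          ⟨connectedComponentIn {x_ | U x_ < H} x, ⟨x, hlt, rfl⟩,
            ⟨x, mem_connectedComponentIn hlt, hxK⟩, rfl⟩,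
          subset_closure (mem_connectedComponentIn hlt)⟩
      · -- U x = H
        by_cases hcl : x ∈ closure {x_ | U x_ < H}
        · obtain ⟨y, hycrit, hyclW⟩ :=
            mem_iUnion₂.1 (closure_sublevel_subset hcont hcoer hcritfin H hcl)
          have hWne : (connectedComponentIn {x_ | U x_ < H} y).Nonempty := by
            rcases eq_empty_or_nonempty (connectedComponentIn {x_ | U x_ < H} y) with hne | h
            · rw [hne, closure_empty] at hyclW
              exact absurd hyclW (notMem_empty x)
            · exact h
          set W := connectedComponentIn {x_ | U x_ < H} y with hWdef
          have hyH : y ∈ {x_ | U x_ < H} := connectedComponentIn_nonempty_iff.1 hWne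
          have hWcomp : IsCompOf {x_ | U x_ < H} W := ⟨y, hyH, rfl⟩
          -- insert x W is connected, in {U ≤ H}, meets K at x, so W ⊆ K
          have hpre : IsPreconnected (insert x W) :=
            isPreconnected_connectedComponentIn.subset_closure (subset_insert _ _)
              (insert_subset hyclW subset_closure)
          have hsub : insert x W ⊆ {x_ | U x_ ≤ H} :=
            insert_subset hxle
              ((connectedComponentIn_subset _ _).trans
                (fun z hz => le_of_lt (show U z < H from hz)))
          have hWsubK : insert x W ⊆ K := subset_comp hK hpre hsub (mem_insert _ _) hxK
          refine ⟨closure W, ⟨W, hWcomp,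
            ⟨y, mem_connectedComponentIn hyH, hWsubK (mem_insert_of_mem _
              (mem_connectedComponentIn hyH))⟩, rfl⟩, hyclW⟩
        · -- not in closure: ball with U ≥ H, isolated point, contradiction
          exfalso
          rw [Metric.mem_closure_iff] at hcl
          push_neg at hcl
          obtain ⟨ε, hε, hεb⟩ := hcl
          refine hKns ⟨x, isolated_case hcont hcritfin hK hxK hε ?_⟩
          intro y hy
          by_contra hyH
          push_neg at hyH
          have h1 := hεb y hyH
          have h2 : dist x y < ε := by rw [dist_comm]; exact mem_ball.1 hy
          linarith
    · rintro x ⟨A, ⟨W, hWcomp, hWKne, rfl⟩, hxA⟩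
      have hWsubK : W ⊆ K := hWK W hWcomp hWKne
      have hclpre : IsPreconnected (closure W) := by
        obtain ⟨w, hw, hWeq⟩ := hWcomp
        exact (hWeq ▸ isPreconnected_connectedComponentIn).closure
      have hclsub : closure W ⊆ {x_ | U x_ ≤ H} := by
        refine closure_minimal ?_ (isClosed_le hcont continuous_const)
        obtain ⟨w, hw, hWeq⟩ := hWcomp
        exact hWeq ▸ (connectedComponentIn_subset _ _).trans
          (fun z hz => le_of_lt (show U z < H from hz))
      obtain ⟨z, hzW, hzK⟩ := hWKne
      exact subset_comp hK hclpre hclsub (subset_closure hzW) hzK hxA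
  · ext m
    simp only [mem_inter_iff, mem_setOf_eq, mem_sUnion]
    constructor
    · rintro ⟨hm, hmK⟩
      refine ⟨hm, ?_⟩
      have hmle : U m ≤ H := hKsub hmK
      rcases lt_or_eq_of_le hmle with hlt | heq
      · exact ⟨connectedComponentIn {x_ | U x_ < H} m, ⟨⟨m, hlt, rfl⟩,
          ⟨m, mem_connectedComponentIn hlt, hmK⟩⟩, mem_connectedComponentIn hlt⟩
      · exfalso
        obtain ⟨ε, hε, hεb⟩ := Metric.eventually_nhds_iff.1 hm
        refine hKns ⟨m, isolated_case hcont hcritfin hK hmK hε ?_⟩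
        intro y hy
        have := hεb (mem_ball.1 hy)
        rw [← heq]; exact this
    · rintro ⟨hm, W, ⟨hWcomp, hWKne⟩, hmW⟩
      exact ⟨hm, hWK W hWcomp hWKne hmW⟩


end
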